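/- If U and V are upper sets of Λ* that are each stable with respect to the cancellation, reduction, permutation, and meet rules, then the elementwise concatenation UV is an upper set stable with respect to those four rules as well. -/
import Mathlib


/-- The Higman ordering on words over an ordered alphabet `Λ`:
`x ≤ y` iff `y` has a subword that is letterwise above `x`. -/
def HigmanLE {Λ : Type*} [PartialOrder Λ] (x y : List Λ) : Prop :=
  List.SublistForall₂ (· ≤ ·) x y

/-- The strict Higman ordering. -/
def HigmanLT {Λ : Type*} [PartialOrder Λ] (x y : List Λ) : Prop :=
  HigmanLE x y ∧ ¬ HigmanLE y x

/-- The upper cone `X^Δ` of a set of words. -/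
def upperCone {Λ : Type*} [PartialOrder Λ] (X : Set (List Λ)) : Set (List Λ) :=
  {y | ∀ x ∈ X, HigmanLE x y}

/-- The lower cone `X^∇` of a set of words. -/
def lowerCone {Λ : Type*} [PartialOrder Λ] (X : Set (List Λ)) : Set (List Λ) :=
  {y | ∀ x ∈ X, HigmanLE y x}

/-- Elementwise concatenation `XY` of two sets of words. -/
def concatSet {Λ : Type*} (X Y : Set (List Λ)) : Set (List Λ) :=
  {w | ∃ x ∈ X, ∃ y ∈ Y, w = x ++ y}

/-- A (MacNeille) closed upper set of words: `Z = Z^{∇Δ}`. -/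
def ClosedUpper {Λ : Type*} [PartialOrder Λ] (Z : Set (List Λ)) : Prop :=
  Z = upperCone (lowerCone Z)

/-- A (MacNeille) closed lower set of words: `W = W^{Δ∇}`. -/
def ClosedLower {Λ : Type*} [PartialOrder Λ] (W : Set (List Λ)) : Prop :=
  W = lowerCone (upperCone W)

/-- An upper set of words with respect to the Higman ordering. -/
def IsUpperWordSet {Λ : Type*} [PartialOrder Λ] (Z : Set (List Λ)) : Prop :=
  ∀ x y : List Λ, HigmanLE x y → x ∈ Z → y ∈ Z

/-- A finitely generated lower set of words. -/
def FinGenLowerWords {Λ : Type*} [PartialOrder Λ] (S : Set (List Λ)) : Prop :=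
  ∃ F : Finset (List Λ), S = {x | ∃ w ∈ F, HigmanLE x w}

/-- A finitely generated lower set of letters. -/
def FinGenLowerLetters {Λ : Type*} [PartialOrder Λ] (S : Set Λ) : Prop :=
  ∃ F : Finset Λ, S = {x | ∃ w ∈ F, x ≤ w}

/-- Well-foundedness: no infinite strictly decreasing sequence. -/
def NoInfiniteDescent {Λ : Type*} [PartialOrder Λ] : Prop :=
  ¬ ∃ f : ℕ → Λ, ∀ n, f (n + 1) < f n

/-- Stability under the cancellation rule. -/
def StableCancel {Λ : Type*} [PartialOrder Λ] (Z : Set (List Λ)) : Prop :=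
  ∀ (y z : List Λ) (α β : Λ), (¬ ∃ c, c ≤ α ∧ c ≤ β) →
    y ++ α :: z ∈ Z → y ++ β :: z ∈ Z → y ++ z ∈ Z

/-- Stability under the reduction rule. -/
def StableReduce {Λ : Type*} [PartialOrder Λ] (Z : Set (List Λ)) : Prop :=
  ∀ (y z : List Λ) (α γ : Λ), α < γ →
    y ++ α :: α :: z ∈ Z → y ++ γ :: z ∈ Z → y ++ α :: z ∈ Z

/-- Stability under the permutation rule. -/
def StablePerm {Λ : Type*} [PartialOrder Λ] (Z : Set (List Λ)) : Prop :=
  ∀ (y z : List Λ) (α β γ : Λ), ¬ α ≤ β → ¬ β ≤ α → α < γ → β < γ →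
    y ++ α :: β :: z ∈ Z → y ++ γ :: z ∈ Z → y ++ β :: α :: z ∈ Z

/-- Stability under the meet rule. -/
def StableMeet {Λ : Type*} [PartialOrder Λ] (Z : Set (List Λ)) : Prop :=
  ∀ (y z : List Λ) (α β m : Λ), ¬ α ≤ β → ¬ β ≤ α →
    IsGLB ({α, β} : Set Λ) m →
    y ++ α :: z ∈ Z → y ++ β :: z ∈ Z → y ++ m :: z ∈ Z

/-- Stability under all four rules. -/
def StableAll {Λ : Type*} [PartialOrder Λ] (Z : Set (List Λ)) : Prop :=
  StableCancel Z ∧ StableReduce Z ∧ StablePerm Z ∧ StableMeet Z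

/-- `[Y]`: the smallest upper set containing `Y` that is stable under the four rules. -/
def stableClosure {Λ : Type*} [PartialOrder Λ] (Y : Set (List Λ)) : Set (List Λ) :=
  ⋂₀ {Z : Set (List Λ) | Y ⊆ Z ∧ IsUpperWordSet Z ∧ StableAll Z}

section ConcatStableAux

open List

variable {Λ : Type*} [PartialOrder Λ]

private lemma cs_higman_of_sublist {l₁ l₂ : List Λ} (h : l₁ <+ l₂) : HigmanLE l₁ l₂ :=
  h.sublistForall₂

private lemma cs_mem_of_sublist {Z : Set (List Λ)} (hZ : IsUpperWordSet Z) {l₁ l₂ : List Λ}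
    (h : l₁ <+ l₂) (hm : l₁ ∈ Z) : l₂ ∈ Z :=
  hZ _ _ (cs_higman_of_sublist h) hm

private lemma cs_append_split {r : Λ → Λ → Prop} {x w : List Λ}
    (h : List.SublistForall₂ r x w) : ∀ u v : List Λ, x = u ++ v →
    ∃ w₁ w₂, w = w₁ ++ w₂ ∧ List.SublistForall₂ r u w₁ ∧ List.SublistForall₂ r v w₂ := by
  induction h with
  | @nil l =>
    intro u v huv
    obtain ⟨hu, hv⟩ := List.append_eq_nil_iff.mp huv.symm
    subst hu; subst hv
    exact ⟨[], l, rfl, List.SublistForall₂.nil, List.SublistForall₂.nil⟩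
  | @cons a₁ a₂ l₁ l₂ hr hs ih =>
    intro u v huv
    cases u with
    | nil =>
      exact ⟨[], a₂ :: l₂, rfl, List.SublistForall₂.nil, by
        simp only [List.nil_append] at huv; rw [← huv]; exact List.SublistForall₂.cons hr hs⟩
    | cons c u' =>
      simp only [List.cons_append, List.cons.injEq] at huv
      obtain ⟨rfl, htl⟩ := huv
      obtain ⟨w₁, w₂, rfl, h₁, h₂⟩ := ih u' v htl
      exact ⟨a₂ :: w₁, w₂, rfl, List.SublistForall₂.cons hr h₁, h₂⟩
  | @cons_right a l₁ l₂ hs ih =>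
    intro u v huv
    obtain ⟨w₁, w₂, rfl, h₁, h₂⟩ := ih u v huv
    exact ⟨a :: w₁, w₂, rfl, List.SublistForall₂.cons_right h₁, h₂⟩

private lemma cs_mem_single {U V : Set (List Λ)} {y z : List Λ} {α : Λ}
    (h : y ++ α :: z ∈ concatSet U V) :
    (∃ p q, y = p ++ q ∧ p ∈ U ∧ q ++ α :: z ∈ V) ∨
    (∃ p q, z = p ++ q ∧ y ++ α :: p ∈ U ∧ q ∈ V) := by
  obtain ⟨u, hu, v, hv, heq⟩ := h
  rcases List.append_eq_append_iff.mp heq with ⟨a', hu', hv'⟩ | ⟨c', hy, hv'⟩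
  · cases a' with
    | nil =>
      refine Or.inl ⟨y, [], by simp, ?_, ?_⟩
      · rw [hu'] at hu; simpa using hu
      · have : v = α :: z := by simpa using hv'.symm
        rw [this] at hv; simpa using hv
    | cons d a'' =>
      simp only [List.cons_append, List.cons.injEq] at hv'
      obtain ⟨rfl, hz⟩ := hv'
      rw [hu'] at hu
      exact Or.inr ⟨a'', v, hz, hu, hv⟩
  · rw [hv'] at hv
    exact Or.inl ⟨u, c', hy, hu, hv⟩

private lemma cs_mem_pair {U V : Set (List Λ)} {y z : List Λ} {α β : Λ}
    (h : y ++ α :: β :: z ∈ concatSet U V) :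
    (∃ p q, y = p ++ q ∧ p ∈ U ∧ q ++ α :: β :: z ∈ V) ∨
    (y ++ [α] ∈ U ∧ β :: z ∈ V) ∨
    (∃ p q, z = p ++ q ∧ y ++ α :: β :: p ∈ U ∧ q ∈ V) := by
  rcases cs_mem_single (z := β :: z) h with hl | ⟨p, q, hpq, hp, hq⟩
  · exact Or.inl hl
  · cases p with
    | nil =>
      have : q = β :: z := by simpa using hpq.symm
      rw [this] at hq
      exact Or.inr (Or.inl ⟨hp, hq⟩)
    | cons d p' =>
      simp only [List.cons_append, List.cons.injEq] at hpq
      obtain ⟨rfl, hz⟩ := hpq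
      exact Or.inr (Or.inr ⟨p', q, hz, hp, hq⟩)

private lemma cs_rule_one {U V : Set (List Λ)} (hU : IsUpperWordSet U) (hV : IsUpperWordSet V)
    (a b : Λ) (t : List Λ)
    (hRU : ∀ y z : List Λ, y ++ a :: z ∈ U → y ++ b :: z ∈ U → y ++ (t ++ z) ∈ U)
    (hRV : ∀ y z : List Λ, y ++ a :: z ∈ V → y ++ b :: z ∈ V → y ++ (t ++ z) ∈ V)
    (y z : List Λ) (h₁ : y ++ a :: z ∈ concatSet U V) (h₂ : y ++ b :: z ∈ concatSet U V) :
    y ++ (t ++ z) ∈ concatSet U V := by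
  rcases cs_mem_single h₁ with ⟨p₁, q₁, hy₁, hp₁, hq₁⟩ | ⟨p₁, q₁, hz₁, hp₁, hq₁⟩ <;>
    rcases cs_mem_single h₂ with ⟨p₂, q₂, hy₂, hp₂, hq₂⟩ | ⟨p₂, q₂, hz₂, hp₂, hq₂⟩
  · -- both splits in y
    rcases List.append_eq_append_iff.mp (hy₁.symm.trans hy₂) with ⟨a', h1, h2⟩ | ⟨c', h1, h2⟩
    · -- p₂ = p₁ ++ a', q₁ = a' ++ q₂, so q₂ <+ q₁
      have hsub : q₂ <+ q₁ := h2 ▸ List.sublist_append_right a' q₂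
      have hq₂' : q₁ ++ b :: z ∈ V :=
        cs_mem_of_sublist hV (hsub.append (List.Sublist.refl _)) hq₂
      exact ⟨p₁, hp₁, q₁ ++ (t ++ z), hRV q₁ z hq₁ hq₂', by simp [hy₁]⟩
    · -- p₁ = p₂ ++ c', q₂ = c' ++ q₁
      have hsub : q₁ <+ q₂ := h2 ▸ List.sublist_append_right c' q₁
      have hq₁' : q₂ ++ a :: z ∈ V :=
        cs_mem_of_sublist hV (hsub.append (List.Sublist.refl _)) hq₁
      exact ⟨p₂, hp₂, q₂ ++ (t ++ z), hRV q₂ z hq₁' hq₂, by simp [hy₂]⟩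
  · -- split of h₁ in y, split of h₂ in z
    have hqz : q₂ <+ z := hz₂ ▸ List.sublist_append_right p₂ q₂
    have hq₂' : q₁ ++ b :: z ∈ V :=
      cs_mem_of_sublist hV ((hqz.trans (List.sublist_cons_self b z)).trans
        (List.sublist_append_right q₁ (b :: z))) hq₂
    exact ⟨p₁, hp₁, q₁ ++ (t ++ z), hRV q₁ z hq₁ hq₂', by simp [hy₁]⟩
  · -- split of h₁ in z, split of h₂ in y
    have hqz : q₁ <+ z := hz₁ ▸ List.sublist_append_right p₁ q₁
    have hq₁' : q₂ ++ a :: z ∈ V :=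
      cs_mem_of_sublist hV ((hqz.trans (List.sublist_cons_self a z)).trans
        (List.sublist_append_right q₂ (a :: z))) hq₁
    exact ⟨p₂, hp₂, q₂ ++ (t ++ z), hRV q₂ z hq₁' hq₂, by simp [hy₂]⟩
  · -- both splits in z
    rcases List.append_eq_append_iff.mp (hz₁.symm.trans hz₂) with ⟨a', h1, h2⟩ | ⟨c', h1, h2⟩
    · -- p₂ = p₁ ++ a'
      have hsub : p₁ <+ p₂ := h1 ▸ List.sublist_append_left p₁ a'
      have hp₁' : y ++ a :: p₂ ∈ U :=
        cs_mem_of_sublist hU ((hsub.cons₂ a).append_left y) hp₁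
      exact ⟨y ++ (t ++ p₂), hRU y p₂ hp₁' hp₂, q₂, hq₂, by simp [hz₂]⟩
    · -- p₁ = p₂ ++ c'
      have hsub : p₂ <+ p₁ := h1 ▸ List.sublist_append_left p₂ c'
      have hp₂' : y ++ b :: p₁ ∈ U :=
        cs_mem_of_sublist hU ((hsub.cons₂ b).append_left y) hp₂
      exact ⟨y ++ (t ++ p₁), hRU y p₁ hp₁ hp₂', q₁, hq₁, by simp [hz₁]⟩

private lemma cs_rule_two {U V : Set (List Λ)} (hU : IsUpperWordSet U) (hV : IsUpperWordSet V)
    (a b c : Λ) (t : List Λ)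
    (hRU : ∀ y z : List Λ, y ++ a :: b :: z ∈ U → y ++ c :: z ∈ U → y ++ (t ++ z) ∈ U)
    (hRV : ∀ y z : List Λ, y ++ a :: b :: z ∈ V → y ++ c :: z ∈ V → y ++ (t ++ z) ∈ V)
    (y z : List Λ) (h₁ : y ++ a :: b :: z ∈ concatSet U V)
    (h₂ : y ++ c :: z ∈ concatSet U V) :
    y ++ (t ++ z) ∈ concatSet U V := by
  rcases cs_mem_pair h₁ with ⟨p₁, q₁, hy₁, hp₁, hq₁⟩ | ⟨hB1, hB2⟩ | ⟨p₁, q₁, hz₁, hp₁, hq₁⟩ <;>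
    rcases cs_mem_single h₂ with ⟨p₂, q₂, hy₂, hp₂, hq₂⟩ | ⟨p₂, q₂, hz₂, hp₂, hq₂⟩
  · -- A & A'
    rcases List.append_eq_append_iff.mp (hy₁.symm.trans hy₂) with ⟨a', h1, h2⟩ | ⟨c', h1, h2⟩
    · have hsub : q₂ <+ q₁ := h2 ▸ List.sublist_append_right a' q₂
      have hq₂' : q₁ ++ c :: z ∈ V :=
        cs_mem_of_sublist hV (hsub.append (List.Sublist.refl _)) hq₂
      exact ⟨p₁, hp₁, q₁ ++ (t ++ z), hRV q₁ z hq₁ hq₂', by simp [hy₁]⟩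
    · have hsub : q₁ <+ q₂ := h2 ▸ List.sublist_append_right c' q₁
      have hq₁' : q₂ ++ a :: b :: z ∈ V :=
        cs_mem_of_sublist hV (hsub.append (List.Sublist.refl _)) hq₁
      exact ⟨p₂, hp₂, q₂ ++ (t ++ z), hRV q₂ z hq₁' hq₂, by simp [hy₂]⟩
  · -- A & C'
    have hqz : q₂ <+ z := hz₂ ▸ List.sublist_append_right p₂ q₂
    have hq₂' : q₁ ++ c :: z ∈ V :=
      cs_mem_of_sublist hV ((hqz.trans (List.sublist_cons_self c z)).trans
        (List.sublist_append_right q₁ (c :: z))) hq₂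
    exact ⟨p₁, hp₁, q₁ ++ (t ++ z), hRV q₁ z hq₁ hq₂', by simp [hy₁]⟩
  · -- B & A'
    have habz : q₂ ++ a :: b :: z ∈ V :=
      cs_mem_of_sublist hV ((List.sublist_cons_self a (b :: z)).trans
        (List.sublist_append_right q₂ (a :: b :: z))) hB2
    exact ⟨p₂, hp₂, q₂ ++ (t ++ z), hRV q₂ z habz hq₂, by simp [hy₂]⟩
  · -- B & C'
    have habp : y ++ a :: b :: p₂ ∈ U :=
      cs_mem_of_sublist hU
        (((List.nil_sublist (b :: p₂)).cons₂ a).append_left y) hB1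
    exact ⟨y ++ (t ++ p₂), hRU y p₂ habp hp₂, q₂, hq₂, by simp [hz₂]⟩
  · -- C & A'
    have hqz : q₁ <+ z := hz₁ ▸ List.sublist_append_right p₁ q₁
    have hq₁' : q₂ ++ a :: b :: z ∈ V :=
      cs_mem_of_sublist hV (((hqz.trans (List.sublist_cons_self b z)).trans
        (List.sublist_cons_self a (b :: z))).trans
        (List.sublist_append_right q₂ (a :: b :: z))) hq₁
    exact ⟨p₂, hp₂, q₂ ++ (t ++ z), hRV q₂ z hq₁' hq₂, by simp [hy₂]⟩
  · -- C & C'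
    rcases List.append_eq_append_iff.mp (hz₁.symm.trans hz₂) with ⟨a', h1, h2⟩ | ⟨c', h1, h2⟩
    · have hsub : p₁ <+ p₂ := h1 ▸ List.sublist_append_left p₁ a'
      have hp₁' : y ++ a :: b :: p₂ ∈ U :=
        cs_mem_of_sublist hU (((hsub.cons₂ b).cons₂ a).append_left y) hp₁
      exact ⟨y ++ (t ++ p₂), hRU y p₂ hp₁' hp₂, q₂, hq₂, by simp [hz₂]⟩
    · have hsub : p₂ <+ p₁ := h1 ▸ List.sublist_append_left p₂ c'
      have hp₂' : y ++ c :: p₁ ∈ U :=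
        cs_mem_of_sublist hU ((hsub.cons₂ c).append_left y) hp₂
      exact ⟨y ++ (t ++ p₁), hRU y p₁ hp₁ hp₂', q₁, hq₁, by simp [hz₁]⟩

end ConcatStableAux

/-- the elementwise concatenation of two stable upper sets is a stable
upper set. -/
theorem concat_stable {Λ : Type*} [PartialOrder Λ] (U V : Set (List Λ))
    (hU : IsUpperWordSet U) (hV : IsUpperWordSet V)
    (hUs : StableAll U) (hVs : StableAll V) :
    IsUpperWordSet (concatSet U V) ∧ StableAll (concatSet U V) := by
  have hupper : IsUpperWordSet (concatSet U V) := by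
    intro x w hxw hx
    obtain ⟨u, hu, v, hv, rfl⟩ := hx
    obtain ⟨w₁, w₂, rfl, h₁, h₂⟩ := cs_append_split hxw u v rfl
    exact ⟨w₁, hU u w₁ h₁ hu, w₂, hV v w₂ h₂ hv, rfl⟩
  refine ⟨hupper, ?_, ?_, ?_, ?_⟩
  · intro y z α β hnc h1 h2
    simpa using cs_rule_one hU hV α β []
      (fun y z => hUs.1 y z α β hnc) (fun y z => hVs.1 y z α β hnc) y z h1 h2
  · intro y z α γ hlt h1 h2
    simpa using cs_rule_two hU hV α α γ [α]
      (fun y z => hUs.2.1 y z α γ hlt) (fun y z => hVs.2.1 y z α γ hlt) y z h1 h2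
  · intro y z α β γ hab hba haγ hbγ h1 h2
    simpa using cs_rule_two hU hV α β γ [β, α]
      (fun y z => hUs.2.2.1 y z α β γ hab hba haγ hbγ)
      (fun y z => hVs.2.2.1 y z α β γ hab hba haγ hbγ) y z h1 h2
  · intro y z α β m hab hba hglb h1 h2
    simpa using cs_rule_one hU hV α β [m]
      (fun y z => hUs.2.2.2 y z α β m hab hba hglb)
      (fun y z => hVs.2.2.2 y z α β m hab hba hglb) y z h1 h2
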